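/- Let A, B, C, d be differentiable matrix-valued functions of one real variable t with values in the complex matrices of sizes n×n, n×p, q×n, q×p respectively, with A(t) invertible for every t, and suppose the derivative of A decomposes as A'(t) = Σ_{l=1}^{k} E_l(t)·F_l(t) for differentiable matrix-valued functions E_l (size n×r_l) and F_l (size r_l×n). Then the quasi-determinant d − C·A⁻¹·B satisfies the derivative formula (d − C·A⁻¹·B)' = d' − C'·A⁻¹·B − C·A⁻¹·B' + Σ_{l=1}^{k} (C·A⁻¹·E_l)·(F_l·A⁻¹·B). -/

import Mathlib

noncomputable section

/-- Entrywise derivative of a matrix-valued function of one real variable. -/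
def dM {a b : Type*} (f : ℝ → Matrix a b ℂ) (t : ℝ) : Matrix a b ℂ :=
  Matrix.of fun i j => deriv (fun s => f s i j) t

section Aux

variable {a b c : Type*} [Fintype b] [DecidableEq b]

lemma diff_det {m : ℕ} {M : ℝ → Matrix (Fin m) (Fin m) ℂ}
    (hM : ∀ i j, Differentiable ℝ fun t => M t i j) :
    Differentiable ℝ fun t => (M t).det := by
  simp only [Matrix.det_apply']
  exact Differentiable.fun_sum fun σ _ =>
    (Differentiable.fun_finsetProd fun i _ => hM (σ i) i).const_mul _

lemma diff_inv_entry {m : ℕ} {M : ℝ → Matrix (Fin m) (Fin m) ℂ}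
    (hM : ∀ i j, Differentiable ℝ fun t => M t i j)
    (hMinv : ∀ t, IsUnit (M t)) (i j : Fin m) :
    Differentiable ℝ fun t => (M t)⁻¹ i j := by
  have hdet : ∀ t, (M t).det ≠ 0 := fun t => by
    have := (Matrix.isUnit_iff_isUnit_det _).mp (hMinv t)
    exact IsUnit.ne_zero this
  have hadj : Differentiable ℝ fun t => (M t).adjugate i j := by
    simp only [Matrix.adjugate_apply]
    apply diff_det
    intro i' j'
    simp only [Matrix.updateRow_apply]
    by_cases h : i' = j <;> simp [h, hM i' j']
  have : ∀ t, (M t)⁻¹ i j = ((M t).det)⁻¹ * (M t).adjugate i j := by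
    intro t
    rw [Matrix.inv_def, Matrix.smul_apply, Ring.inverse_eq_inv', smul_eq_mul]
  simp only [this]
  exact ((diff_det hM).inv hdet).mul hadj

lemma dM_mul {m p' q' : ℕ} {f : ℝ → Matrix (Fin q') (Fin m) ℂ}
    {g : ℝ → Matrix (Fin m) (Fin p') ℂ}
    (hf : ∀ i j, Differentiable ℝ fun t => f t i j)
    (hg : ∀ i j, Differentiable ℝ fun t => g t i j) (t : ℝ) :
    dM (fun s => f s * g s) t = dM f t * g t + f t * dM g t := by
  ext i j
  have hder : HasDerivAt (fun s => (f s * g s) i j)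
      (∑ x : Fin m, (deriv (fun s => f s i x) t * g t x j
        + f t i x * deriv (fun s => g s x j) t)) t := by
    simp only [Matrix.mul_apply]
    exact HasDerivAt.fun_sum fun x _ =>
      ((hf i x t).hasDerivAt.mul (hg x j t).hasDerivAt)
  show deriv (fun s => (f s * g s) i j) t = _
  rw [hder.deriv, Finset.sum_add_distrib]
  simp [dM, Matrix.mul_apply, Matrix.add_apply]

lemma diff_mul_entry {m p' q' : ℕ} {f : ℝ → Matrix (Fin q') (Fin m) ℂ}
    {g : ℝ → Matrix (Fin m) (Fin p') ℂ}
    (hf : ∀ i j, Differentiable ℝ fun t => f t i j)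
    (hg : ∀ i j, Differentiable ℝ fun t => g t i j) (i j) :
    Differentiable ℝ fun t => (f t * g t) i j := by
  simp only [Matrix.mul_apply]
  exact Differentiable.fun_sum fun x _ => (hf i x).mul (hg x j)

lemma dM_inv {m : ℕ} {M : ℝ → Matrix (Fin m) (Fin m) ℂ}
    (hM : ∀ i j, Differentiable ℝ fun t => M t i j)
    (hMinv : ∀ t, IsUnit (M t)) (t : ℝ) :
    dM (fun s => (M s)⁻¹) t = -((M t)⁻¹ * dM M t * (M t)⁻¹) := by
  have hinv := diff_inv_entry hM hMinv
  have h1 : dM (fun s => M s * (M s)⁻¹) t = dM M t * (M t)⁻¹ + M t * dM (fun s => (M s)⁻¹) t :=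
    dM_mul hM hinv t
  have h2 : dM (fun s => M s * (M s)⁻¹) t = 0 := by
    have : (fun s => M s * (M s)⁻¹) = fun _ => (1 : Matrix (Fin m) (Fin m) ℂ) := by
      funext s; exact Matrix.mul_nonsing_inv _ ((Matrix.isUnit_iff_isUnit_det _).mp (hMinv s))
    rw [this]
    ext i j
    simp [dM]
  have h3 : M t * dM (fun s => (M s)⁻¹) t = -(dM M t * (M t)⁻¹) :=
    eq_neg_of_add_eq_zero_right (h1.symm.trans h2)
  have h4 := congrArg (fun X => (M t)⁻¹ * X) h3
  simp only [← Matrix.mul_assoc, Matrix.nonsing_inv_mul _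
    ((Matrix.isUnit_iff_isUnit_det _).mp (hMinv t)), Matrix.one_mul, Matrix.mul_neg] at h4
  rw [h4, Matrix.mul_assoc]

end Aux

theorem quasideterminant_derivative_formula
    (n p q k : ℕ) (r : Fin k → ℕ)
    (A : ℝ → Matrix (Fin n) (Fin n) ℂ)
    (B : ℝ → Matrix (Fin n) (Fin p) ℂ)
    (C : ℝ → Matrix (Fin q) (Fin n) ℂ)
    (d : ℝ → Matrix (Fin q) (Fin p) ℂ)
    (E : (l : Fin k) → ℝ → Matrix (Fin n) (Fin (r l)) ℂ)
    (F : (l : Fin k) → ℝ → Matrix (Fin (r l)) (Fin n) ℂ)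
    (hA : ∀ i j, Differentiable ℝ fun t => A t i j)
    (hB : ∀ i j, Differentiable ℝ fun t => B t i j)
    (hC : ∀ i j, Differentiable ℝ fun t => C t i j)
    (hd : ∀ i j, Differentiable ℝ fun t => d t i j)
    (hE : ∀ l i j, Differentiable ℝ fun t => E l t i j)
    (hF : ∀ l i j, Differentiable ℝ fun t => F l t i j)
    (hAinv : ∀ t, IsUnit (A t))
    (hdecomp : ∀ t, dM A t = ∑ l : Fin k, E l t * F l t) :
    ∀ t, dM (fun s => d s - C s * (A s)⁻¹ * B s) t =
      dM d t - dM C t * (A t)⁻¹ * B t - C t * (A t)⁻¹ * dM B t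
      + ∑ l : Fin k, (C t * (A t)⁻¹ * E l t) * (F l t * (A t)⁻¹ * B t) := by
  intro t
  have hinv := diff_inv_entry hA hAinv
  have hCAi : ∀ i j, Differentiable ℝ fun s => (C s * (A s)⁻¹) i j :=
    diff_mul_entry hC hinv
  have hCAiB : ∀ i j, Differentiable ℝ fun s => (C s * (A s)⁻¹ * B s) i j :=
    diff_mul_entry hCAi hB
  -- derivative of the difference
  have hsub : dM (fun s => d s - C s * (A s)⁻¹ * B s) t
      = dM d t - dM (fun s => C s * (A s)⁻¹ * B s) t := by
    ext i j
    simp only [dM, Matrix.of_apply, Matrix.sub_apply]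
    exact deriv_sub (hd i j t) (hCAiB i j t)
  have hprod : dM (fun s => C s * (A s)⁻¹ * B s) t
      = dM (fun s => C s * (A s)⁻¹) t * B t + (C t * (A t)⁻¹) * dM B t :=
    dM_mul hCAi hB t
  have hprod2 : dM (fun s => C s * (A s)⁻¹) t
      = dM C t * (A t)⁻¹ + C t * dM (fun s => (A s)⁻¹) t :=
    dM_mul hC hinv t
  have hinvder := dM_inv hA hAinv t
  rw [hsub, hprod, hprod2, hinvder, hdecomp t]
  have hsum : C t * -((A t)⁻¹ * (∑ l : Fin k, E l t * F l t) * (A t)⁻¹)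
      = -(∑ l : Fin k, (C t * (A t)⁻¹ * E l t) * (F l t * (A t)⁻¹)) := by
    simp only [Matrix.mul_neg]
    congr 1
    rw [Matrix.mul_assoc, Matrix.sum_mul, Matrix.mul_sum, Matrix.mul_sum]
    exact Finset.sum_congr rfl fun l _ => by simp only [Matrix.mul_assoc]
  rw [Matrix.add_mul, hsum]
  rw [Matrix.neg_mul, Matrix.sum_mul]
  have : ∀ l : Fin k, (C t * (A t)⁻¹ * E l t) * (F l t * (A t)⁻¹) * B t
      = (C t * (A t)⁻¹ * E l t) * (F l t * (A t)⁻¹ * B t) := fun l => by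
    rw [Matrix.mul_assoc]
  simp only [this]
  abel

end
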